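/- Let m be a positive integer and x a real number. Define polynomials P_n ∈ ℝ[z] by P_0 = 1, P_1 = z − x, and P_n = (z − (x + (n−1)(m(x−1)+2)))·P_{n−1} − (n−1)^2·(m(x−1)+1)·P_{n−2} for n ≥ 2. Let L : ℝ[z] → ℝ be the unique linear functional with L(z^n) = 𝓐_m(n,x) for all n ≥ 0. Then L(P_i · P_j) = 0 whenever i ≠ j; that is, the Eulerian-Dowling polynomials 𝓐_m(n,x) are the moments of the orthogonal polynomial family (P_n). -/

import Mathlib

open Finset Polynomial


/-- Whitney numbers of the second kind:
`W_m(n,k) = (1/(m^k k!)) ∑_{i=0}^k (−1)^{k−i} C(k,i) (mi+1)^n`. -/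
noncomputable def whitney2 (m n k : ℕ) : ℝ :=
  (1 / ((m : ℝ) ^ k * k.factorial)) *
    ∑ i ∈ Finset.range (k + 1), (-1 : ℝ) ^ (k - i) * (k.choose i) * ((m : ℝ) * i + 1) ^ n

/-- Eulerian–Dowling polynomials `𝓐_m(n,x) = ∑_{k=0}^n k!·W_m(n,k)·(x−1)^{n−k}`. -/
noncomputable def eulerianDowling (m n : ℕ) (x : ℝ) : ℝ :=
  ∑ k ∈ Finset.range (n + 1), (k.factorial : ℝ) * whitney2 m n k * (x - 1) ^ (n - k)

/-- `P_0 = 1`, `P_1 = z − x`,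
`P_n = (z − (x + (n−1)(m(x−1)+2)))·P_{n−1} − (n−1)²·(m(x−1)+1)·P_{n−2}` for `n ≥ 2`. -/
noncomputable def eulerianDowlingOP (m : ℕ) (x : ℝ) : ℕ → Polynomial ℝ
  | 0 => 1
  | 1 => Polynomial.X - Polynomial.C x
  | (n + 2) =>
      (Polynomial.X - Polynomial.C (x + ((n : ℝ) + 1) * ((m : ℝ) * (x - 1) + 2))) *
          eulerianDowlingOP m x (n + 1) -
        Polynomial.C (((n : ℝ) + 1) ^ 2 * ((m : ℝ) * (x - 1) + 1)) * eulerianDowlingOP m x n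

noncomputable def Tb (m k j : ℕ) : ℝ :=
  ∑ i ∈ Finset.range (j + 1), (-1 : ℝ) ^ (j - i) * (j.choose i) * ((m : ℝ) * i + 1) ^ k

lemma Tb_zero_left (m j : ℕ) (hj : 0 < j) : Tb m 0 j = 0 := by
  have h := Int.alternating_sum_range_choose (n := j)
  have h2 : ∑ i ∈ Finset.range (j+1), (-1:ℝ)^i * (j.choose i) = 0 := by
    have := congrArg (fun z : ℤ => (z : ℝ)) h
    push_cast at this
    rw [this, if_neg hj.ne']
  calc Tb m 0 j = (-1:ℝ)^j * ∑ i ∈ Finset.range (j+1), (-1:ℝ)^i * (j.choose i) := by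
        rw [Finset.mul_sum]
        refine Finset.sum_congr rfl fun i hi => ?_
        have hij : i ≤ j := Nat.lt_succ_iff.mp (Finset.mem_range.mp hi)
        have hsq : (-1:ℝ)^i * (-1:ℝ)^i = 1 := by
          rw [← pow_add, ← two_mul, pow_mul]; norm_num
        have this1 : (-1:ℝ)^(j-i) * (-1:ℝ)^i = (-1:ℝ)^j := by
          rw [← pow_add]; congr 1; omega
        have h3 : (-1:ℝ)^(j-i) = (-1:ℝ)^j * (-1:ℝ)^i :=
          calc (-1:ℝ)^(j-i) = (-1:ℝ)^(j-i) * ((-1:ℝ)^i*(-1:ℝ)^i) := by rw [hsq]; ring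
            _ = ((-1:ℝ)^(j-i) * (-1:ℝ)^i)*(-1:ℝ)^i := by ring
            _ = (-1:ℝ)^j * (-1:ℝ)^i := by rw [this1]
        rw [pow_zero, mul_one, h3]; ring
    _ = 0 := by rw [h2, mul_zero]

lemma cast_choose_mul (j i : ℕ) (hij : i ≤ j + 1) :
    ((j.choose i : ℝ)) * ((j:ℝ)+1) = (((j+1).choose i : ℝ)) * (((j:ℝ)+1) - (i:ℝ)) := by
  have h := Nat.choose_mul_succ_eq j i
  have hc : ((j.choose i * (j+1) : ℕ) : ℝ) = (((j+1).choose i * (j+1-i) : ℕ) : ℝ) := by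
    exact_mod_cast congrArg (Nat.cast : ℕ → ℝ) h
  push_cast [Nat.cast_sub hij] at hc
  linarith [hc]

lemma Tb_rec (m k j : ℕ) :
    Tb m (k+1) (j+1) = ((m:ℝ)*((j:ℝ)+1)+1) * Tb m k (j+1) + (m:ℝ)*((j:ℝ)+1) * Tb m k j := by
  have key : ∀ i ∈ Finset.range (j+2),
      (-1:ℝ)^(j+1-i) * (((j+1).choose i : ℕ) : ℝ) * ((m : ℝ)*(i:ℝ)+1)^(k+1)
      = ((m:ℝ)*((j:ℝ)+1)+1) * ((-1:ℝ)^(j+1-i) * (((j+1).choose i : ℕ) : ℝ) * ((m:ℝ)*(i:ℝ)+1)^k)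
        - (m:ℝ) * ((-1:ℝ)^(j+1-i) * (((j:ℝ)+1) * ((j.choose i : ℕ) : ℝ)) * ((m:ℝ)*(i:ℝ)+1)^k) := by
    intro i hi
    have hij : i ≤ j + 1 := Nat.lt_succ_iff.mp (Finset.mem_range.mp hi)
    have habs := cast_choose_mul j i hij
    have expand : ((m:ℝ)*(i:ℝ)+1)^(k+1) = ((m:ℝ)*(i:ℝ)+1) * ((m:ℝ)*(i:ℝ)+1)^k := by ring
    rw [expand]
    linear_combination ((m:ℝ) * (-1:ℝ)^(j+1-i) * ((m:ℝ)*(i:ℝ)+1)^k) * habs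
  have hsum : Tb m (k+1) (j+1)
      = ((m:ℝ)*((j:ℝ)+1)+1) * (∑ i ∈ Finset.range (j+2),
          (-1:ℝ)^(j+1-i) * (((j+1).choose i : ℕ) : ℝ) * ((m:ℝ)*(i:ℝ)+1)^k)
        - (m:ℝ) * (∑ i ∈ Finset.range (j+2),
          (-1:ℝ)^(j+1-i) * (((j:ℝ)+1) * ((j.choose i : ℕ) : ℝ)) * ((m:ℝ)*(i:ℝ)+1)^k) := by
    rw [Tb, Finset.sum_congr rfl key, Finset.sum_sub_distrib, ← Finset.mul_sum, ← Finset.mul_sum]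
  have hB : (∑ i ∈ Finset.range (j+2),
        (-1:ℝ)^(j+1-i) * (((j:ℝ)+1) * ((j.choose i : ℕ) : ℝ)) * ((m:ℝ)*(i:ℝ)+1)^k)
      = -(((j:ℝ)+1) * Tb m k j) := by
    rw [Finset.sum_range_succ, Nat.choose_succ_self]
    push_cast
    simp only [mul_zero, zero_mul, add_zero]
    rw [Tb, Finset.mul_sum, ← Finset.sum_neg_distrib]
    refine Finset.sum_congr rfl fun i hi => ?_
    have hij : i ≤ j := Nat.lt_succ_iff.mp (Finset.mem_range.mp hi)
    have hpow : (-1:ℝ)^(j+1-i) = -(-1:ℝ)^(j-i) := by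
      have : j+1-i = (j-i)+1 := by omega
      rw [this, pow_succ]; ring
    rw [hpow]; ring
  rw [hsum, hB, ← Tb]
  ring

lemma Tb_zero (m : ℕ) : ∀ k j : ℕ, k < j → Tb m k j = 0 := by
  intro k
  induction k with
  | zero => exact fun j hj => Tb_zero_left m j hj
  | succ k ih =>
    intro j hj
    obtain ⟨j', rfl⟩ : ∃ j', j = j' + 1 := ⟨j - 1, by omega⟩
    rw [Tb_rec, ih j' (by omega), ih (j'+1) (by omega)]
    ring

lemma Tb_zero' (m k : ℕ) : Tb m k 0 = 1 := by
  simp [Tb]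

noncomputable def Bp (m : ℕ) (x : ℝ) (k n : ℕ) : ℝ :=
  ∑ j ∈ Finset.range (k + 1), (j.choose n : ℝ) * (Tb m k j / (m:ℝ)^j) * (x - 1) ^ (k - j)

lemma Bp_eq_eulerianDowling (m : ℕ) (x : ℝ) (k : ℕ) : Bp m x k 0 = eulerianDowling m k x := by
  rw [Bp, eulerianDowling]
  refine Finset.sum_congr rfl fun j _ => ?_
  rw [Nat.choose_zero_right, whitney2, ← Tb]
  have hj : (j.factorial : ℝ) ≠ 0 := Nat.cast_ne_zero.mpr j.factorial_ne_zero
  have key : (j.factorial:ℝ) * (1/((m:ℝ)^j * (j.factorial:ℝ)) * Tb m k j) = Tb m k j / (m:ℝ)^j := by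
    by_cases hm0 : ((m:ℝ))^j = 0
    · rw [hm0]; simp
    · field_simp
  push_cast
  rw [← mul_assoc ((j.factorial:ℝ)) _ _, mul_assoc, ← key]
  ring

lemma Bp_zero (m : ℕ) (x : ℝ) (k n : ℕ) (h : k < n) : Bp m x k n = 0 := by
  rw [Bp]
  refine Finset.sum_eq_zero fun j hj => ?_
  have : j < n := lt_of_le_of_lt (Nat.lt_succ_iff.mp (Finset.mem_range.mp hj)) h
  rw [Nat.choose_eq_zero_of_lt this]
  push_cast; ring

lemma abs_cast (j n : ℕ) : (j:ℝ) * (j.choose n : ℝ)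
    = (n:ℝ) * (j.choose n : ℝ) + ((n:ℝ)+1) * (j.choose (n+1) : ℝ) := by
  rcases le_or_gt n j with h | h
  · have := Nat.choose_succ_right_eq j n
    have hc : ((j.choose (n+1) * (n+1) : ℕ) : ℝ) = ((j.choose n * (j - n) : ℕ) : ℝ) := by
      exact_mod_cast congrArg (Nat.cast : ℕ → ℝ) this
    push_cast [Nat.cast_sub h] at hc
    linarith
  · rw [Nat.choose_eq_zero_of_lt h, Nat.choose_eq_zero_of_lt (by omega)]
    push_cast; ring

lemma Bp_key (m : ℕ) (hm : 0 < m) (x : ℝ) (k n : ℕ) :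
    Bp m x (k+1) n = ∑ j ∈ Finset.range (k+1),
      (((m:ℝ)*(j:ℝ)+1)*(x-1)*(j.choose n : ℝ) + ((j:ℝ)+1)*((j+1).choose n : ℝ))
        * (Tb m k j / (m:ℝ)^j) * (x-1)^(k-j) := by
  have hmne : ((m:ℝ)) ≠ 0 := Nat.cast_ne_zero.mpr hm.ne'
  rw [Bp, Finset.sum_range_succ']
  have hsplit : ∀ j ∈ Finset.range (k+1),
      ((j+1).choose n : ℝ) * (Tb m (k+1) (j+1) / (m:ℝ)^(j+1)) * (x-1)^(k+1-(j+1))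
      = (((j+1).choose n : ℝ) * ((m:ℝ)*((j:ℝ)+1)+1)) * (Tb m k (j+1) / (m:ℝ)^(j+1)) * (x-1)^(k-j)
        + (((j:ℝ)+1)*((j+1).choose n : ℝ)) * (Tb m k j / (m:ℝ)^j) * (x-1)^(k-j) := by
    intro j hj
    have hexp : k+1-(j+1) = k-j := by omega
    rw [hexp, Tb_rec]
    have hpow : ((m:ℝ))^(j+1) = (m:ℝ)^j * (m:ℝ) := by ring
    field_simp
    ring
  rw [Finset.sum_congr rfl hsplit, Finset.sum_add_distrib]
  -- first sum: reindex
  have h1 : (∑ j ∈ Finset.range (k+1),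
      (((j+1).choose n : ℝ) * ((m:ℝ)*((j:ℝ)+1)+1)) * (Tb m k (j+1) / (m:ℝ)^(j+1)) * (x-1)^(k-j))
      + ((0:ℕ).choose n : ℝ) * (Tb m (k+1) 0 / (m:ℝ)^0) * (x-1)^(k+1-0)
      = ∑ j ∈ Finset.range (k+1),
        (((m:ℝ)*(j:ℝ)+1)*(x-1)*(j.choose n : ℝ)) * (Tb m k j / (m:ℝ)^j) * (x-1)^(k-j) := by
    have hre : ∀ j ∈ Finset.range (k+1),
        (((j+1).choose n : ℝ) * ((m:ℝ)*((j:ℝ)+1)+1)) * (Tb m k (j+1) / (m:ℝ)^(j+1)) * (x-1)^(k-j)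
        = (fun i : ℕ => ((i.choose n : ℝ) * ((m:ℝ)*(i:ℝ)+1)) * (Tb m k i / (m:ℝ)^i) * (x-1)^(k+1-i)) (j+1) := by
      intro j hj
      have : k+1-(j+1) = k-j := by omega
      simp only [this]
      push_cast
      ring
    have hg0 : ((0:ℕ).choose n : ℝ) * (Tb m (k+1) 0 / (m:ℝ)^0) * (x-1)^(k+1-0)
        = (fun i : ℕ => ((i.choose n : ℝ) * ((m:ℝ)*(i:ℝ)+1)) * (Tb m k i / (m:ℝ)^i) * (x-1)^(k+1-i)) 0 := by
      simp [Tb_zero']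
    rw [Finset.sum_congr rfl hre, hg0]
    refine Eq.trans (Finset.sum_range_succ'
      (fun i : ℕ => ((i.choose n : ℝ) * ((m:ℝ)*(i:ℝ)+1)) * (Tb m k i / (m:ℝ)^i) * (x-1)^(k+1-i))
      (k+1)).symm ?_
    rw [Finset.sum_range_succ]
    rw [Tb_zero m k (k+1) (by omega)]
    have hz : ∀ i ∈ Finset.range (k+1),
        ((i.choose n : ℝ) * ((m:ℝ)*(i:ℝ)+1)) * (Tb m k i / (m:ℝ)^i) * (x-1)^(k+1-i)
        = (((m:ℝ)*(i:ℝ)+1)*(x-1)*(i.choose n : ℝ)) * (Tb m k i / (m:ℝ)^i) * (x-1)^(k-i) := by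
      intro i hi
      have hik : i ≤ k := Nat.lt_succ_iff.mp (Finset.mem_range.mp hi)
      have : k+1-i = (k-i)+1 := by omega
      rw [this, pow_succ]
      ring
    rw [Finset.sum_congr rfl hz]
    simp
  rw [add_right_comm, h1, ← Finset.sum_add_distrib]
  exact Finset.sum_congr rfl fun j hj => by ring

lemma Bp_rec0 (m : ℕ) (hm : 0 < m) (x : ℝ) (k : ℕ) :
    Bp m x (k+1) 0 = x * Bp m x k 0 + ((m:ℝ)*(x-1)+1) * Bp m x k 1 := by
  rw [Bp_key m hm x k 0, Bp, Bp, Finset.mul_sum, Finset.mul_sum, ← Finset.sum_add_distrib]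
  refine Finset.sum_congr rfl fun j hj => ?_
  rw [Nat.choose_zero_right, Nat.choose_zero_right, Nat.choose_one_right]
  push_cast
  ring

lemma Bp_recS (m : ℕ) (hm : 0 < m) (x : ℝ) (k n : ℕ) :
    Bp m x (k+1) (n+1) = ((n:ℝ)+1) * Bp m x k n
      + (x + ((n:ℝ)+1)*((m:ℝ)*(x-1)+2)) * Bp m x k (n+1)
      + ((n:ℝ)+2)*((m:ℝ)*(x-1)+1) * Bp m x k (n+2) := by
  rw [Bp_key m hm x k (n+1), Bp, Bp, Bp, Finset.mul_sum, Finset.mul_sum, Finset.mul_sum,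
    ← Finset.sum_add_distrib, ← Finset.sum_add_distrib]
  refine Finset.sum_congr rfl fun j hj => ?_
  have hp : (((j+1).choose (n+1) : ℕ) : ℝ) = (j.choose n : ℝ) + (j.choose (n+1) : ℝ) := by
    rw [Nat.choose_succ_succ]; push_cast; ring
  have a0 := abs_cast j n
  have a1 := abs_cast j (n+1)
  push_cast at a1 ⊢
  linear_combination (Tb m k j / (m:ℝ)^j * (x-1)^(k-j)) *
    ( ((j:ℝ)+1) * hp + a0 + ((m:ℝ)*(x-1)+1) * a1 )

lemma moment (m : ℕ) (hm : 0 < m) (x : ℝ) (L : Polynomial ℝ →ₗ[ℝ] ℝ)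
    (hL : ∀ n : ℕ, L (Polynomial.X ^ n) = eulerianDowling m n x) :
    ∀ n k : ℕ, L (Polynomial.X ^ k * eulerianDowlingOP m x n)
      = (n.factorial : ℝ) * ((m:ℝ)*(x-1)+1)^n * Bp m x k n := by
  intro n
  induction n using Nat.twoStepInduction with
  | zero =>
    intro k
    rw [eulerianDowlingOP, mul_one, hL, ← Bp_eq_eulerianDowling]
    simp
  | one =>
    intro k
    have hpoly : (Polynomial.X : Polynomial ℝ)^k * (Polynomial.X - Polynomial.C x)
        = Polynomial.X^(k+1) - x • Polynomial.X^k := by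
      rw [Polynomial.smul_eq_C_mul]; ring
    rw [eulerianDowlingOP, hpoly, map_sub, map_smul, hL, hL, smul_eq_mul,
      ← Bp_eq_eulerianDowling, ← Bp_eq_eulerianDowling, Bp_rec0 m hm x k]
    simp
  | more n ih0 ih1 =>
    intro k
    have hpoly : (Polynomial.X : Polynomial ℝ)^k * eulerianDowlingOP m x (n+2)
        = Polynomial.X^(k+1) * eulerianDowlingOP m x (n+1)
          - (x + ((n : ℝ) + 1) * ((m : ℝ) * (x - 1) + 2)) • (Polynomial.X^k * eulerianDowlingOP m x (n+1))
          - (((n : ℝ) + 1) ^ 2 * ((m : ℝ) * (x - 1) + 1)) • (Polynomial.X^k * eulerianDowlingOP m x n) := by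
      rw [eulerianDowlingOP, Polynomial.smul_eq_C_mul, Polynomial.smul_eq_C_mul]
      ring
    rw [hpoly, map_sub, map_sub, map_smul, map_smul, smul_eq_mul, smul_eq_mul,
      ih1, ih1, ih0, Bp_recS m hm x k n]
    have hf1 : ((n+2).factorial : ℝ) = ((n:ℝ)+2) * ((n+1).factorial : ℝ) := by
      rw [Nat.factorial_succ]; push_cast; ring
    have hf2 : ((n+1).factorial : ℝ) = ((n:ℝ)+1) * (n.factorial : ℝ) := by
      rw [Nat.factorial_succ]; push_cast; ring
    rw [hf1, hf2]
    push_cast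
    ring

lemma OP_natDegree (m : ℕ) (x : ℝ) : ∀ n, (eulerianDowlingOP m x n).natDegree ≤ n := by
  intro n
  induction n using Nat.twoStepInduction with
  | zero => simp [eulerianDowlingOP]
  | one => rw [eulerianDowlingOP]; simp [Polynomial.natDegree_X_sub_C]
  | more n ih0 ih1 =>
    rw [eulerianDowlingOP]
    refine le_trans (Polynomial.natDegree_sub_le _ _) (max_le ?_ ?_)
    · refine le_trans Polynomial.natDegree_mul_le ?_
      have h1 : (Polynomial.X - Polynomial.C (x + ((n : ℝ) + 1) * ((m : ℝ) * (x - 1) + 2))).natDegree = 1 :=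
        Polynomial.natDegree_X_sub_C _
      omega
    · refine le_trans Polynomial.natDegree_mul_le ?_
      have h2 : (Polynomial.C (((n : ℝ) + 1) ^ 2 * ((m : ℝ) * (x - 1) + 1))).natDegree = 0 :=
        Polynomial.natDegree_C _
      omega


/-- The Eulerian–Dowling polynomials `𝓐_m(n,x)` are the moments of the orthogonal family `P_n`. -/
theorem eulerianDowling_moments (m : ℕ) (hm : 0 < m) (x : ℝ)
    (L : Polynomial ℝ →ₗ[ℝ] ℝ)
    (hL : ∀ n : ℕ, L (Polynomial.X ^ n) = eulerianDowling m n x) :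
    ∀ i j : ℕ, i ≠ j → L (eulerianDowlingOP m x i * eulerianDowlingOP m x j) = 0 := by
  have key : ∀ i j : ℕ, j < i → L (eulerianDowlingOP m x i * eulerianDowlingOP m x j) = 0 := by
    intro i j hlt
    have hdeg : (eulerianDowlingOP m x j).natDegree < j + 1 :=
      Nat.lt_succ_of_le (OP_natDegree m x j)
    have hsplit : eulerianDowlingOP m x i * eulerianDowlingOP m x j
        = ∑ k ∈ Finset.range (j+1),
            ((eulerianDowlingOP m x j).coeff k) • (Polynomial.X^k * eulerianDowlingOP m x i) := by
      conv_lhs => rw [Polynomial.as_sum_range' (eulerianDowlingOP m x j) (j+1) hdeg]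
      rw [Finset.mul_sum]
      refine Finset.sum_congr rfl fun k hk => ?_
      rw [← Polynomial.C_mul_X_pow_eq_monomial, Polynomial.smul_eq_C_mul]
      ring
    rw [hsplit, map_sum]
    refine Finset.sum_eq_zero fun k hk => ?_
    rw [map_smul, smul_eq_mul, moment m hm x L hL i k,
      Bp_zero m x k i (lt_of_le_of_lt (Nat.lt_succ_iff.mp (Finset.mem_range.mp hk)) hlt)]
    ring
  intro i j hij
  rcases hij.lt_or_gt with h | h
  · rw [mul_comm]; exact key j i h
  · exact key i j h
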